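/- Let C be a bounded subset of ℝ^k and let Δ(C) denote the set of Borel probability measures on C. Then the convex hull of C equals the set of barycenters {∫ x dm(x) : m ∈ Δ(C)}. -/

import Mathlib

open MeasureTheory Set Bornology Module Filter Pointwise
set_option linter.unusedSectionVars false


section Helpers

variable {E : Type} [NormedAddCommGroup E] [NormedSpace ℝ E] [FiniteDimensional ℝ E]
  [MeasurableSpace E] [BorelSpace E]

lemma aux_ae_mem (m : Measure E) {C : Set E} (h0 : m Cᶜ = 0) : ∀ᵐ x ∂m, x ∈ C := by
  rw [MeasureTheory.ae_iff]
  exact h0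

lemma aux_integrable_id (m : Measure E) [IsFiniteMeasure m] {C : Set E}
    (hCb : IsBounded C) (h0 : m Cᶜ = 0) : Integrable (fun x => x) m := by
  obtain ⟨R, hR⟩ := hCb.subset_closedBall 0
  refine ⟨aestronglyMeasurable_id, HasFiniteIntegral.of_bounded (C := R) ?_⟩
  filter_upwards [aux_ae_mem m h0] with x hx
  simpa [Metric.mem_closedBall, dist_zero_right] using hR hx

lemma aux_bary_mem_closure (m : Measure E) [IsProbabilityMeasure m] {C : Set E}
    (hCb : IsBounded C) (h0 : m Cᶜ = 0) :
    (∫ x, x ∂m) ∈ closure (convexHull ℝ C) := by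
  refine (convex_convexHull ℝ C).closure.integral_mem isClosed_closure ?_
    (aux_integrable_id m hCb h0)
  filter_upwards [aux_ae_mem m h0] with x hx
  exact subset_closure (subset_convexHull ℝ C hx)

end Helpers

variable {E : Type} [NormedAddCommGroup E] [NormedSpace ℝ E]

lemma aux_interior_closure {K : Set E} (hK : Convex ℝ K) {y : E} (hy : y ∈ interior K) :
    interior (closure K) ⊆ K := by
  intro x hx
  obtain ⟨ε, hε, hball⟩ := Metric.isOpen_iff.mp isOpen_interior x hx
  set δ : ℝ := ε / (2 * (‖x - y‖ + 1)) with hδdef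
  have hxy : (0:ℝ) < ‖x - y‖ + 1 := by positivity
  have hδ : 0 < δ := by positivity
  have hz : x + δ • (x - y) ∈ closure K := by
    apply interior_subset
    apply hball
    rw [Metric.mem_ball, dist_eq_norm]
    have : x + δ • (x - y) - x = δ • (x - y) := by abel
    rw [this, norm_smul, Real.norm_eq_abs, abs_of_pos hδ]
    calc δ * ‖x - y‖ ≤ δ * (‖x - y‖ + 1) := by nlinarith [norm_nonneg (x - y)]
      _ = ε / 2 := by rw [hδdef]; field_simp
      _ < ε := by linarith
  clear_value δ
  have hcombo : (δ / (1 + δ)) • y + (1 / (1 + δ)) • (x + δ • (x - y)) = x := by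
    have h1δ : (1:ℝ) + δ ≠ 0 := by positivity
    match_scalars <;> field_simp <;> ring
  have hsum : δ / (1 + δ) + 1 / (1 + δ) = 1 := by
    have h1δ : (1:ℝ)+δ ≠ 0 := by positivity
    rw [← add_div, div_eq_one_iff_eq h1δ]
    ring
  have := hK.combo_interior_closure_mem_interior hy hz
    (by positivity : (0:ℝ) < δ / (1 + δ))
    (by positivity : (0:ℝ) ≤ 1 / (1 + δ))
    hsum
  rw [hcombo] at this
  exact interior_subset this

variable {E : Type} [NormedAddCommGroup E] [NormedSpace ℝ E] [FiniteDimensional ℝ E]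

lemma aux_support_fn {T : Set E} (hT : Convex ℝ T) (hTc : IsClosed T) {b : E}
    (hb : b ∈ frontier T) :
    ∃ f : E →L[ℝ] ℝ, ‖f‖ = 1 ∧ ∀ x ∈ T, f x ≤ f b := by
  have hbT : b ∈ T := by
    have h := frontier_subset_closure (s := T) hb
    rwa [hTc.closure_eq] at h
  have hbc : b ∈ closure Tᶜ := by
    rw [frontier_eq_closure_inter_closure] at hb
    exact hb.2
  obtain ⟨u, hu, hub⟩ := mem_closure_iff_seq_limit.mp hbc
  have hgex : ∀ n : ℕ, ∃ g : E →L[ℝ] ℝ, ‖g‖ = 1 ∧ ∀ x ∈ T, g x ≤ g (u n) := by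
    intro n
    obtain ⟨f, s, hfs, hsb⟩ := geometric_hahn_banach_closed_point hT hTc (hu n)
    have hf0 : f ≠ 0 := by
      intro h
      have h1 := hfs b hbT
      rw [h] at h1 hsb
      simp at h1 hsb; linarith
    have hnf : (0:ℝ) < ‖f‖ := norm_pos_iff.mpr hf0
    refine ⟨‖f‖⁻¹ • f, ?_, ?_⟩
    · exact norm_smul_inv_norm hf0
    · intro x hx
      simp only [ContinuousLinearMap.coe_smul', Pi.smul_apply, smul_eq_mul]
      have : f x ≤ f (u n) := le_of_lt (lt_trans (hfs x hx) hsb)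
      exact mul_le_mul_of_nonneg_left this (inv_nonneg.mpr hnf.le)
  choose g hg1 hg2 using hgex
  have hsph : ∀ n, g n ∈ Metric.sphere (0 : E →L[ℝ] ℝ) 1 := by
    intro n; simpa [mem_sphere_zero_iff_norm] using hg1 n
  obtain ⟨f, hfs, φ, hφ, hconv⟩ :=
    (isCompact_sphere (0 : E →L[ℝ] ℝ) 1).tendsto_subseq hsph
  have hfnorm : ‖f‖ = 1 := by simpa [mem_sphere_zero_iff_norm] using hfs
  refine ⟨f, hfnorm, fun x hx => ?_⟩
  have h1 : Tendsto (fun n => (g (φ n)) x) atTop (nhds (f x)) :=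
    ((ContinuousLinearMap.apply ℝ ℝ x).continuous.tendsto f).comp hconv
  have h2 : Tendsto (fun n => (g (φ n)) (u (φ n))) atTop (nhds (f b)) := by
    have hd : Tendsto (fun n => (g (φ n)) (u (φ n)) - (g (φ n)) b) atTop (nhds 0) := by
      have hb0 : Tendsto (fun n => ‖u (φ n) - b‖) atTop (nhds 0) := by
        have h4 : Tendsto (fun n => u (φ n) - b) atTop (nhds 0) := by
          simpa using ((hub.comp hφ.tendsto_atTop).sub (tendsto_const_nhds (x := b)))
        simpa using h4.norm
      apply squeeze_zero_norm _ hb0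
      intro n
      have : (g (φ n)) (u (φ n)) - (g (φ n)) b = (g (φ n)) (u (φ n) - b) := by
        rw [map_sub]
      rw [this]
      calc ‖(g (φ n)) (u (φ n) - b)‖ ≤ ‖g (φ n)‖ * ‖u (φ n) - b‖ :=
            (g (φ n)).le_opNorm _
        _ = ‖u (φ n) - b‖ := by rw [hg1, one_mul]
    have h3 : Tendsto (fun n => (g (φ n)) b) atTop (nhds (f b)) :=
      ((ContinuousLinearMap.apply ℝ ℝ b).continuous.tendsto f).comp hconv
    have := hd.add h3
    simpa using this
  exact le_of_tendsto_of_tendsto' h1 h2 (fun n => hg2 (φ n) x hx)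
lemma aux_reduce (n : ℕ)
    (ih : ∀ (F : Type) [NormedAddCommGroup F] [InnerProductSpace ℝ F] [MeasurableSpace F]
      [BorelSpace F] [FiniteDimensional ℝ F], finrank ℝ F ≤ n →
      ∀ (μ : Measure F), IsProbabilityMeasure μ → ∀ (D : Set F), IsBounded D →
        μ Dᶜ = 0 → (∫ x, x ∂μ) ∈ convexHull ℝ D)
    {E : Type} [NormedAddCommGroup E] [InnerProductSpace ℝ E] [MeasurableSpace E] [BorelSpace E]
    [FiniteDimensional ℝ E]
    (m : Measure E) [IsProbabilityMeasure m] {C : Set E} (hCb : IsBounded C)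
    (h0 : m Cᶜ = 0) (W : Submodule ℝ E) (hW : finrank ℝ ↥W ≤ n)
    (hsub : ∀ x ∈ C, x - (∫ x, x ∂m) ∈ W) : (∫ x, x ∂m) ∈ convexHull ℝ C := by
  set b := ∫ x, x ∂m with hbdef
  set φ : E ≃ᵐ E := (Homeomorph.subRight b).toMeasurableEquiv with hφdef
  have hφapp : ∀ x, φ x = x - b := fun _ => rfl
  set ν : Measure E := m.map φ with hνdef
  haveI : IsProbabilityMeasure ν := Measure.isProbabilityMeasure_map φ.measurable.aemeasurable
  set C₂ : Set E := (fun x => x - b) '' C with hC2def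
  have hν2 : ν C₂ᶜ = 0 := by
    rw [hνdef, MeasurableEquiv.map_apply]
    refine measure_mono_null ?_ h0
    intro x hx hxC
    exact hx (mem_image_of_mem _ hxC)
  have hC2W : C₂ ⊆ (W : Set E) := by rintro _ ⟨x, hx, rfl⟩; exact hsub x hx
  have hC2b : IsBounded C₂ := by
    obtain ⟨R, hR⟩ := hCb.subset_closedBall 0
    refine (Metric.isBounded_closedBall (x := (0:E)) (r := R + ‖b‖)).subset ?_
    rintro _ ⟨x, hx, rfl⟩
    rw [Metric.mem_closedBall, dist_zero_right]
    have hxR : ‖x‖ ≤ R := by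
      have := hR hx; rwa [Metric.mem_closedBall, dist_zero_right] at this
    calc ‖x - b‖ ≤ ‖x‖ + ‖b‖ := norm_sub_le _ _
      _ ≤ R + ‖b‖ := by linarith
  have hWm : MeasurableSet (W : Set E) := (Submodule.closed_of_finiteDimensional W).measurableSet
  have hemb : MeasurableEmbedding ((↑) : W → E) := MeasurableEmbedding.subtype_coe hWm
  set μ' : Measure W := ν.comap (↑) with hμ'def
  have hμ'app : ∀ s : Set W, μ' s = ν (((↑) : W → E) '' s) := fun s => hemb.comap_apply ν s
  have hνW : ν ((W : Set E)ᶜ) = 0 := measure_mono_null (compl_subset_compl.mpr hC2W) hν2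
  have hνWfull : ν (W : Set E) = 1 := by
    have h := measure_add_measure_compl (μ := ν) hWm
    rw [hνW, add_zero, measure_univ] at h
    exact h
  haveI hμ'prob : IsProbabilityMeasure μ' := by
    constructor
    rw [hμ'app, image_univ, Subtype.range_coe]
    exact hνWfull
  set D : Set W := ((↑) : W → E) ⁻¹' C₂ with hDdef
  have hD0 : μ' Dᶜ = 0 := by
    rw [hμ'app]
    refine measure_mono_null ?_ hν2
    rintro _ ⟨w, hw, rfl⟩
    exact hw
  have hDb : IsBounded D := by
    obtain ⟨R, hR⟩ := hC2b.subset_closedBall 0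
    refine (Metric.isBounded_closedBall (x := (0:W)) (r := R)).subset ?_
    intro w hw
    rw [Metric.mem_closedBall, dist_zero_right]
    have := hR hw
    rwa [Metric.mem_closedBall, dist_zero_right] at this
  have hint : Integrable (fun x : ↥W => x) μ' := aux_integrable_id μ' hDb hD0
  have hbary : ((↑(∫ w, w ∂μ') : E)) = 0 := by
    have h1 : ∫ w, (W.subtypeL w) ∂μ' = W.subtypeL (∫ w, w ∂μ') :=
      W.subtypeL.integral_comp_comm hint
    simp only [Submodule.subtypeL_apply] at h1
    rw [← h1]
    have h2 : ∫ w, ((w : E)) ∂μ' = ∫ x, x ∂(μ'.map ((↑) : W → E)) :=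
      (hemb.integral_map (fun x : E => x)).symm
    have h3 : μ'.map ((↑) : W → E) = ν := by
      rw [hμ'def, hemb.map_comap, Subtype.range_coe]
      refine Measure.restrict_eq_self_of_ae_mem ?_
      have : ∀ᵐ x ∂ν, x ∈ C₂ := aux_ae_mem ν hν2
      filter_upwards [this] with x hx
      exact hC2W hx
    have h4 : ∫ x, x ∂ν = 0 := by
      have h4' : ∫ x, id x ∂(m.map ⇑φ) = ∫ x, id (φ x) ∂m :=
        MeasureTheory.integral_map φ.measurable.aemeasurable aestronglyMeasurable_id
      simp only [id_eq] at h4'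
      rw [hνdef, h4']
      have hmi : Integrable (fun x : E => x) m := aux_integrable_id m hCb h0
      simp only [hφapp]
      rw [integral_sub hmi (integrable_const b), integral_const]
      simp [← hbdef]
    rw [h2, h3, h4]
  have hmem : (∫ w, w ∂μ') ∈ convexHull ℝ D :=
    ih ↥W hW μ' hμ'prob D hDb hD0
  have h0mem : (0 : E) ∈ convexHull ℝ C₂ := by
    have h5 := mem_image_of_mem (((↑) : W → E)) hmem
    rw [show (((↑) : W → E) = ⇑W.subtype) from rfl, W.subtype.image_convexHull] at h5
    have himg2 : ⇑W.subtype '' D = C₂ := by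
      apply subset_antisymm
      · rintro _ ⟨w, hw, rfl⟩; exact hw
      · intro z hz; exact ⟨⟨z, hC2W hz⟩, hz, rfl⟩
    rw [himg2] at h5
    simp only [Submodule.subtype_apply] at h5
    rwa [hbary] at h5
  have key : ∀ s : Set E, (fun x => x - b) '' s = (-b) +ᵥ s := by
    intro s
    ext z
    constructor
    · rintro ⟨x, hx, rfl⟩
      exact ⟨x, hx, by simp [vadd_eq_add, sub_eq_neg_add]⟩
    · rintro ⟨x, hx, rfl⟩
      exact ⟨x, hx, by simp [vadd_eq_add, sub_eq_neg_add]⟩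
  have h6 : convexHull ℝ C₂ = (fun x => x - b) '' (convexHull ℝ C) := by
    rw [hC2def, key, convexHull_vadd, ← key]
  rw [h6] at h0mem
  obtain ⟨y, hy, hy0⟩ := h0mem
  have : y = b := by rwa [sub_eq_zero] at hy0
  rwa [← this]
lemma aux_main : ∀ (n : ℕ) (E : Type) [NormedAddCommGroup E] [InnerProductSpace ℝ E]
    [MeasurableSpace E] [BorelSpace E] [FiniteDimensional ℝ E], finrank ℝ E ≤ n →
    ∀ (m : Measure E), IsProbabilityMeasure m → ∀ (C : Set E), IsBounded C →
      m Cᶜ = 0 → (∫ x, x ∂m) ∈ convexHull ℝ C := by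
  intro n
  induction n with
  | zero =>
    intro E _ _ _ _ _ hE m hm C hCb h0
    haveI := hm
    haveI : Subsingleton E := by
      rw [← finrank_zero_iff (R := ℝ)]
      omega
    have hCne : C.Nonempty := by
      by_contra h
      rw [not_nonempty_iff_eq_empty] at h
      rw [h, compl_empty] at h0
      simp [measure_univ] at h0
    obtain ⟨x, hx⟩ := hCne
    have : (∫ y, y ∂m) = x := Subsingleton.elim _ _
    rw [this]
    exact subset_convexHull ℝ C hx
  | succ n ih =>
    intro E _ _ _ _ _ hE m hm C hCb h0
    haveI := hm
    by_cases hbC : (∫ x, x ∂m) ∈ convexHull ℝ C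
    · exact hbC
    set b := ∫ x, x ∂m with hbdef
    exfalso
    apply hbC
    by_cases hspan : affineSpan ℝ C = ⊤
    · -- full-dimensional case
      set K := convexHull ℝ C with hKdef
      have hbT : b ∈ closure K := aux_bary_mem_closure m hCb h0
      obtain ⟨y, hy⟩ : (interior K).Nonempty := by
        rw [hKdef, interior_convexHull_nonempty_iff_affineSpan_eq_top]
        exact hspan
      have hbni : b ∉ interior (closure K) := by
        intro h
        exact hbC (aux_interior_closure (convex_convexHull ℝ C) hy h)
      have hbfr : b ∈ frontier (closure K) := by
        rw [frontier, isClosed_closure.closure_eq]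
        exact ⟨hbT, hbni⟩
      obtain ⟨f, hf1, hfle⟩ :=
        aux_support_fn (convex_convexHull ℝ C).closure isClosed_closure hbfr
      -- a.e. equality of f with f b
      have hintm : Integrable (fun x : E => x) m := aux_integrable_id m hCb h0
      have hintf : Integrable (fun x => f x) m := f.integrable_comp hintm
      have hintg : Integrable (fun x => f b - f x) m := (integrable_const (f b)).sub hintf
      have hgae : 0 ≤ᵐ[m] fun x => f b - f x := by
        filter_upwards [aux_ae_mem m h0] with x hx
        have h12 : f x ≤ f b := hfle x (subset_closure (subset_convexHull ℝ C hx))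
        show (0:ℝ) ≤ f b - f x
        linarith
      have hgint : ∫ x, (f b - f x) ∂m = 0 := by
        rw [integral_sub (integrable_const (f b)) hintf, integral_const]
        simp only [probReal_univ, one_smul, smul_eq_mul]
        rw [f.integral_comp_comm hintm, ← hbdef]
        ring
      have hae : ∀ᵐ x ∂m, f x = f b := by
        have h7 := (integral_eq_zero_iff_of_nonneg_ae hgae hintg).mp hgint
        filter_upwards [h7] with x hx
        have : f b - f x = 0 := hx
        linarith
      set C' := C ∩ {x | f x = f b} with hC'def
      have h0' : m C'ᶜ = 0 := by
        rw [hC'def, compl_inter]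
        refine measure_union_null h0 ?_
        have h11 := MeasureTheory.ae_iff.mp hae
        rw [compl_setOf]
        exact h11
      have hC'b : IsBounded C' := hCb.subset inter_subset_left
      have hf0 : f ≠ 0 := by
        intro h
        rw [h] at hf1
        simp at hf1
      set g : E →ₗ[ℝ] ℝ := (f : E →ₗ[ℝ] ℝ) with hgdef
      have hker : finrank ℝ ↥(LinearMap.ker g) ≤ n := by
        have hrange : LinearMap.range g = ⊤ := by
          rw [LinearMap.range_eq_top]
          intro c
          obtain ⟨x, hx⟩ : ∃ x, f x ≠ 0 := by
            by_contra h
            push_neg at h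
            exact hf0 (ContinuousLinearMap.ext fun x => by simpa [hgdef] using h x)
          refine ⟨(c / f x) • x, ?_⟩
          have : g ((c / f x) • x) = (c / f x) * f x := by simp [hgdef]
          rw [this, div_mul_cancel₀ _ hx]
        have hsum := LinearMap.finrank_range_add_finrank_ker g
        rw [hrange, finrank_top] at hsum
        have hEr : finrank ℝ E ≤ n + 1 := hE
        have h13 : finrank ℝ ℝ = 1 := finrank_self ℝ
        omega
      have hsub : ∀ x ∈ C', x - b ∈ LinearMap.ker g := by
        intro x hx
        rw [LinearMap.mem_ker]
        have : f x = f b := hx.2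
        have h14 : g (x - b) = f x - f b := by simp [hgdef]
        rw [h14, this, sub_self]
      have := aux_reduce n ih m hC'b h0' (LinearMap.ker g) hker hsub
      exact convexHull_mono inter_subset_left this
    · -- lower-dimensional case
      have hCne : C.Nonempty := by
        by_contra h
        rw [not_nonempty_iff_eq_empty] at h
        rw [h, compl_empty] at h0
        simp [measure_univ] at h0
      set W := (affineSpan ℝ C).direction with hWdef
      have hWne : W ≠ ⊤ := by
        intro h
        apply hspan
        obtain ⟨x0, hx0⟩ := hCne
        rw [← AffineSubspace.direction_eq_top_iff_of_nonempty
          (⟨x0, subset_affineSpan ℝ C hx0⟩ : ((affineSpan ℝ C : Set E)).Nonempty)]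
        exact h
      have hW : finrank ℝ ↥W ≤ n := by
        have := Submodule.finrank_lt (K := ℝ) (V := E) hWne
        omega
      have hbmem : b ∈ affineSpan ℝ C := by
        have h8 : b ∈ closure (convexHull ℝ C) := aux_bary_mem_closure m hCb h0
        have h9 : closure (convexHull ℝ C) ⊆ closure (affineSpan ℝ C : Set E) :=
          closure_mono (convexHull_subset_affineSpan C)
        have h10 : IsClosed (affineSpan ℝ C : Set E) :=
          (affineSpan ℝ C).closed_of_finiteDimensional
        rw [h10.closure_eq] at h9
        exact h9 h8
      have hsub : ∀ x ∈ C, x - b ∈ W := by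
        intro x hx
        have := AffineSubspace.vsub_mem_direction (subset_affineSpan ℝ C hx) hbmem
        simpa [vsub_eq_sub] using this
      exact aux_reduce n ih m hCb h0 W hW hsub
/-- The convex hull of a bounded set `C ⊆ ℝ^k` equals the set of barycenters of Borel
probability measures supported on `C`. -/
theorem convexHull_eq_barycenters (k : ℕ) (C : Set (EuclideanSpace ℝ (Fin k)))
    (hC : Bornology.IsBounded C) :
    convexHull ℝ C =
      {b : EuclideanSpace ℝ (Fin k) |
        ∃ m : Measure (EuclideanSpace ℝ (Fin k)),
          IsProbabilityMeasure m ∧ m Cᶜ = 0 ∧ b = ∫ x, x ∂m} := by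
  ext b
  constructor
  · intro hb
    rw [convexHull_eq] at hb
    obtain ⟨ι, t, w, z, hw0, hw1, hzC, hcm⟩ := hb
    set μ : Measure (EuclideanSpace ℝ (Fin k)) :=
      ∑ i ∈ t, ENNReal.ofReal (w i) • Measure.dirac (z i) with hμdef
    have hdiracC : ∀ i ∈ t, (Measure.dirac (z i)) Cᶜ = 0 := by
      intro i hi
      rw [Measure.dirac_apply]
      exact Set.indicator_of_notMem (by simpa using hzC i hi) _
    haveI hμprob : IsProbabilityMeasure μ := by
      constructor
      rw [hμdef, Measure.finset_sum_apply]
      have : ∀ i ∈ t, (ENNReal.ofReal (w i) • Measure.dirac (z i)) Set.univ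
          = ENNReal.ofReal (w i) := by
        intro i hi
        simp [Measure.smul_apply]
      rw [Finset.sum_congr rfl this, ← ENNReal.ofReal_sum_of_nonneg hw0, hw1,
        ENNReal.ofReal_one]
    refine ⟨μ, hμprob, ?_, ?_⟩
    · rw [hμdef, Measure.finset_sum_apply]
      refine Finset.sum_eq_zero fun i hi => ?_
      rw [Measure.smul_apply, hdiracC i hi, smul_zero]
    · have hint : ∀ i ∈ t, Integrable (fun x : EuclideanSpace ℝ (Fin k) => x)
          (ENNReal.ofReal (w i) • Measure.dirac (z i)) := by
        intro i hi
        refine Integrable.smul_measure ?_ ENNReal.ofReal_ne_top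
        refine ⟨aestronglyMeasurable_id, ?_⟩
        refine HasFiniteIntegral.of_bounded (C := ‖z i‖) ?_
        rw [MeasureTheory.ae_dirac_eq]
        simp
      rw [hμdef, integral_finset_sum_measure hint]
      have : ∀ i ∈ t, ∫ x, x ∂(ENNReal.ofReal (w i) • Measure.dirac (z i))
          = w i • z i := by
        intro i hi
        rw [integral_smul_measure, integral_dirac, ENNReal.toReal_ofReal (hw0 i hi)]
      rw [Finset.sum_congr rfl this, ← Finset.centerMass_eq_of_sum_1 t z hw1, hcm]
  · rintro ⟨m, hm, h0, rfl⟩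
    haveI := hm
    exact aux_main (finrank ℝ (EuclideanSpace ℝ (Fin k))) _ le_rfl m hm C hC h0
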